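/- Let G be a graph, let Q be a collection of maximum cliques of G such that X_Q is connected, and suppose ω(G) ≥ (2/3)(Δ(G)+1). Then either ⋂Q ≠ ∅, or the following holds: X_Q has maximum degree at most 2, and whenever B and C are distinct neighbors of A in X_Q, we have B ∩ C = ∅ and |A ∩ B| = |A ∩ C| = ω(G)/2. -/

import Mathlib

open SimpleGraph

/-- The intersection graph `X_Q` of a collection `Q` of cliques. -/
def interGraph {V : Type*} [DecidableEq V] (Q : Finset (Finset V)) :
    SimpleGraph {s // s ∈ Q} where
  Adj A B := A ≠ B ∧ ((A : Finset V) ∩ (B : Finset V)).Nonempty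
  symm := by
    constructor
    rintro A B ⟨hne, h⟩
    exact ⟨hne.symm, by rwa [Finset.inter_comm]⟩
  loopless := by constructor; rintro A ⟨hne, -⟩; exact hne rfl

instance {V : Type*} [DecidableEq V] (Q : Finset (Finset V)) :
    DecidableRel (interGraph Q).Adj := fun _ _ => inferInstanceAs (Decidable (_ ∧ _))


set_option maxHeartbeats 1000000
section


section Aux
variable {V : Type*} [Fintype V] [DecidableEq V] (G : SimpleGraph V) [DecidableRel G.Adj]

lemma inf_subset' {R : Finset (Finset V)} {T : Finset V} (hT : T ∈ R) : R.inf id ⊆ T := by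
  simpa using (Finset.inf_le (f := id) hT)

lemma subset_sup' {R : Finset (Finset V)} {T : Finset V} (hT : T ∈ R) : T ⊆ R.sup id := by
  simpa using (Finset.le_sup (f := id) hT)

lemma clique_adj' {s : Finset V} (h : G.IsClique (s : Set V)) {x y : V}
    (hx : x ∈ s) (hy : y ∈ s) (hne : x ≠ y) : G.Adj x y :=
  h (Finset.mem_coe.mpr hx) (Finset.mem_coe.mpr hy) hne

lemma insert_clique_false {C : Finset V} {v : V}
    (hC : G.IsNClique G.cliqueNum C) (hv : v ∉ C) (hadj : ∀ u ∈ C, G.Adj v u) : False := by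
  have hcl : G.IsClique ((insert v C : Finset V) : Set V) := by
    rw [Finset.coe_insert]
    exact hC.isClique.insert (fun u hu hne => hadj u (Finset.mem_coe.mp hu))
  have hle := IsClique.card_le_cliqueNum (tc := hcl)
  rw [Finset.card_insert_of_notMem hv, hC.card_eq] at hle
  omega

lemma pair_bound (hω : 2 * (G.maxDegree + 1) ≤ 3 * G.cliqueNum)
    {T S : Finset V} (hT : G.IsNClique G.cliqueNum T) (hS : G.IsNClique G.cliqueNum S)
    (hTS : (T ∩ S).Nonempty) : G.cliqueNum ≤ 2 * (T ∩ S).card := by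
  obtain ⟨v, hv⟩ := hTS
  rw [Finset.mem_inter] at hv
  have hsub : T ∪ S ⊆ insert v (G.neighborFinset v) := by
    intro u hu
    rcases eq_or_ne u v with rfl | hne
    · exact Finset.mem_insert_self _ _
    · refine Finset.mem_insert_of_mem ?_
      rw [SimpleGraph.mem_neighborFinset]
      rcases Finset.mem_union.mp hu with hu' | hu'
      · exact clique_adj' G hT.isClique hv.1 hu' hne.symm
      · exact clique_adj' G hS.isClique hv.2 hu' hne.symm
  have h1 : (T ∪ S).card ≤ G.maxDegree + 1 := by
    calc (T ∪ S).card ≤ (insert v (G.neighborFinset v)).card := Finset.card_le_card hsub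
    _ ≤ (G.neighborFinset v).card + 1 := Finset.card_insert_le _ _
    _ = G.degree v + 1 := by rw [G.card_neighborFinset_eq_degree]
    _ ≤ G.maxDegree + 1 := by have := G.degree_le_maxDegree v; omega
  have h2 : (T ∩ S).card + (T ∪ S).card = G.cliqueNum + G.cliqueNum := by
    rw [Finset.card_inter_add_card_union, hT.card_eq, hS.card_eq]
  omega

lemma hajnal : ∀ (R : Finset (Finset V)), R.Nonempty →
    (∀ s ∈ R, G.IsNClique G.cliqueNum s) →
    2 * G.cliqueNum ≤ (R.inf id).card + (R.sup id).card := by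
  intro R hRne
  induction hRne using Finset.Nonempty.cons_induction with
  | singleton a =>
    intro hR
    rw [Finset.inf_singleton, Finset.sup_singleton]
    have := (hR a (Finset.mem_singleton_self a)).card_eq
    simp only [id] at *
    omega
  | cons a s ha hs ih =>
    intro hR
    have hRs : ∀ t ∈ s, G.IsNClique G.cliqueNum t := fun t ht => hR t (Finset.mem_cons_of_mem ht)
    have ha' : G.IsNClique G.cliqueNum a := hR a (Finset.mem_cons_self a s)
    have IH := ih hRs
    set I := s.inf id with hI
    set U := s.sup id with hU
    rw [Finset.inf_cons, Finset.sup_cons]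
    simp only [id_eq, Finset.inf_eq_inter, Finset.sup_eq_union]
    rw [← hI, ← hU]
    -- clique : I ∪ (a ∩ U)
    obtain ⟨T₀, hT₀⟩ := hs
    have hIT₀ : I ⊆ T₀ := inf_subset' hT₀
    have hclq : G.IsClique ((I ∪ a ∩ U : Finset V) : Set V) := by
      intro x hx y hy hne
      rw [Finset.mem_coe, Finset.mem_union] at hx hy
      rcases hx with hx | hx <;> rcases hy with hy | hy
      · exact clique_adj' G (hRs T₀ hT₀).isClique (hIT₀ hx) (hIT₀ hy) hne
      · obtain ⟨T, hT, hyT⟩ := Finset.mem_sup.mp (Finset.mem_inter.mp hy).2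
        exact clique_adj' G (hRs T hT).isClique (inf_subset' hT hx) hyT hne
      · obtain ⟨T, hT, hxT⟩ := Finset.mem_sup.mp (Finset.mem_inter.mp hx).2
        exact clique_adj' G (hRs T hT).isClique hxT (inf_subset' hT hy) hne
      · exact clique_adj' G ha'.isClique (Finset.mem_inter.mp hx).1 (Finset.mem_inter.mp hy).1 hne
    have hcard : (I ∪ a ∩ U).card ≤ G.cliqueNum := IsClique.card_le_cliqueNum (tc := hclq)
    have e1 : (I \ (a ∩ U)).card + (a ∩ U).card = (I ∪ a ∩ U).card := by
      rw [Finset.card_sdiff_add_card]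
    have e2 : (a ∩ U).card + (a \ U).card = a.card := by
      rw [← Finset.card_sdiff_add_card_eq_card (Finset.inter_subset_left : a ∩ U ⊆ a)]
      have : a \ (a ∩ U) = a \ U := by
        ext x; simp only [Finset.mem_sdiff, Finset.mem_inter]; tauto
      rw [this]; omega
    have e3 : (I \ a).card ≤ (I \ (a ∩ U)).card :=
      Finset.card_le_card (Finset.sdiff_subset_sdiff (Finset.Subset.refl I) Finset.inter_subset_left)
    have e4 : (I ∩ a).card + (I \ a).card = I.card := by
      rw [← Finset.card_sdiff_add_card_eq_card (Finset.inter_subset_left : I ∩ a ⊆ I)]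
      have : I \ (I ∩ a) = I \ a := by
        ext x; simp only [Finset.mem_sdiff, Finset.mem_inter]; tauto
      rw [this]; omega
    have e5 : (a \ U).card + U.card = (a ∪ U).card := Finset.card_sdiff_add_card a U
    have e6 : (a ∩ I).card = (I ∩ a).card := by rw [Finset.inter_comm]
    have e7 : a.card = G.cliqueNum := ha'.card_eq
    omega

lemma sup_card_le (R : Finset (Finset V)) (hR : ∀ s ∈ R, G.IsNClique G.cliqueNum s)
    {v : V} (hv : v ∈ R.inf id) : (R.sup id).card ≤ G.maxDegree + 1 := by
  have hsub : R.sup id ⊆ insert v (G.neighborFinset v) := by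
    intro u hu
    obtain ⟨T, hT, huT⟩ := Finset.mem_sup.mp hu
    have hvT : v ∈ T := inf_subset' hT hv
    rcases eq_or_ne u v with rfl | hne
    · exact Finset.mem_insert_self _ _
    · refine Finset.mem_insert_of_mem ?_
      rw [SimpleGraph.mem_neighborFinset]
      exact clique_adj' G (hR T hT).isClique hvT huT hne.symm
  calc (R.sup id).card ≤ (insert v (G.neighborFinset v)).card := Finset.card_le_card hsub
  _ ≤ (G.neighborFinset v).card + 1 := Finset.card_insert_le _ _
  _ = G.degree v + 1 := by rw [G.card_neighborFinset_eq_degree]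
  _ ≤ G.maxDegree + 1 := by have := G.degree_le_maxDegree v; omega

lemma triple_common (hω : 2 * (G.maxDegree + 1) ≤ 3 * G.cliqueNum)
    {A B C : Finset V} (hA : G.IsNClique G.cliqueNum A) (hB : G.IsNClique G.cliqueNum B)
    (hC : G.IsNClique G.cliqueNum C)
    (hAB : (A ∩ B).Nonempty) (hAC : (A ∩ C).Nonempty) (hBC : (B ∩ C).Nonempty) :
    (A ∩ B ∩ C).Nonempty := by
  by_contra hemp
  rw [Finset.not_nonempty_iff_eq_empty] at hemp
  have hnot : ∀ x : V, x ∈ A → x ∈ B → x ∈ C → False := by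
    intro x h1 h2 h3
    have : x ∈ A ∩ B ∩ C := by simp [Finset.mem_inter, h1, h2, h3]
    rw [hemp] at this; exact absurd this (Finset.notMem_empty x)
  have p1 := pair_bound G hω hA hB hAB
  have p2 := pair_bound G hω hA hC hAC
  have p3 := pair_bound G hω hB hC hBC
  have d1 : Disjoint (A ∩ B) (A ∩ C) := by
    rw [Finset.disjoint_left]
    intro x hx hy
    exact hnot x (Finset.mem_inter.mp hx).1 (Finset.mem_inter.mp hx).2 (Finset.mem_inter.mp hy).2
  have d3 : Disjoint (A ∩ C) (B ∩ C) := by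
    rw [Finset.disjoint_left]
    intro x hx hy
    exact hnot x (Finset.mem_inter.mp hx).1 (Finset.mem_inter.mp hy).1 (Finset.mem_inter.mp hx).2
  have d2 : Disjoint (A ∩ B) (B ∩ C) := by
    rw [Finset.disjoint_left]
    intro x hx hy
    exact hnot x (Finset.mem_inter.mp hx).1 (Finset.mem_inter.mp hx).2 (Finset.mem_inter.mp hy).2
  have c1 : (A ∩ B).card + (A ∩ C).card ≤ G.cliqueNum := by
    rw [← Finset.card_union_of_disjoint d1, ← hA.card_eq]
    exact Finset.card_le_card (Finset.union_subset Finset.inter_subset_left Finset.inter_subset_left)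
  have c3sub : (A ∩ C) ∪ (B ∩ C) ⊆ C :=
    Finset.union_subset Finset.inter_subset_right Finset.inter_subset_right
  have c3 : (A ∩ C).card + (B ∩ C).card ≤ G.cliqueNum := by
    rw [← Finset.card_union_of_disjoint d3, ← hC.card_eq]
    exact Finset.card_le_card c3sub
  have hCeq : (A ∩ C) ∪ (B ∩ C) = C := by
    apply Finset.eq_of_subset_of_card_le c3sub
    rw [Finset.card_union_of_disjoint d3, hC.card_eq]
    omega
  obtain ⟨v, hv⟩ := hAB
  rw [Finset.mem_inter] at hv
  have hvC : v ∉ C := fun h => hnot v hv.1 hv.2 h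
  refine insert_clique_false G hC hvC ?_
  intro u huC
  have hne : v ≠ u := fun he => hvC (he ▸ huC)
  rw [← hCeq, Finset.mem_union] at huC
  rcases huC with h | h
  · exact clique_adj' G hA.isClique hv.1 (Finset.mem_inter.mp h).1 hne
  · exact clique_adj' G hB.isClique hv.2 (Finset.mem_inter.mp h).1 hne

end Aux

end

/-- Christofides–Edwards–King: if `ω(G) ≥ (2/3)(Δ(G)+1)` and `Q` is a collection of
maximum cliques of `G` with `X_Q` connected, then either `⋂ Q ≠ ∅`, or `X_Q` has
maximum degree at most `2` and any two distinct neighbors `B, C` of a clique `A` in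
`X_Q` satisfy `B ∩ C = ∅` and `|A ∩ B| = |A ∩ C| = ω(G)/2`. -/
theorem two_thirds_equality_structure {V : Type*} [Fintype V] [DecidableEq V]
    (G : SimpleGraph V) [DecidableRel G.Adj]
    (hω : 3 * G.cliqueNum ≥ 2 * (G.maxDegree + 1))
    (Q : Finset (Finset V)) (hQ : ∀ s ∈ Q, G.IsNClique G.cliqueNum s)
    (hconn : (interGraph Q).Connected) :
    (⋂ s ∈ Q, ((s : Finset V) : Set V)).Nonempty ∨
      ((interGraph Q).maxDegree ≤ 2 ∧
        ∀ A B C : {s // s ∈ Q}, (interGraph Q).Adj A B → (interGraph Q).Adj A C → B ≠ C →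
          ((B : Finset V) ∩ (C : Finset V) = ∅ ∧
            2 * ((A : Finset V) ∩ (B : Finset V)).card = G.cliqueNum ∧
            2 * ((A : Finset V) ∩ (C : Finset V)).card = G.cliqueNum)) := by
  classical
  have hω' : 2 * (G.maxDegree + 1) ≤ 3 * G.cliqueNum := hω
  have hω1 : 1 ≤ G.cliqueNum := by omega
  have hQne : Q.Nonempty := by
    obtain ⟨⟨s, hs⟩⟩ := hconn.nonempty
    exact ⟨s, hs⟩
  set P : Finset (Finset (Finset V)) :=
    Q.powerset.filter (fun R => 0 < R.card ∧ 0 < (R.inf id).card) with hP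
  have hPne : P.Nonempty := by
    obtain ⟨s, hs⟩ := hQne
    refine ⟨{s}, Finset.mem_filter.mpr ⟨Finset.mem_powerset.mpr ?_, ?_, ?_⟩⟩
    · simpa using hs
    · simp
    · rw [Finset.inf_singleton]
      simp only [id_eq]
      have := (hQ s hs).card_eq
      omega
  obtain ⟨R, hRP, hRmax⟩ := Finset.exists_max_image P (fun R => R.card) hPne
  obtain ⟨hRQ', hRcard, hKcard⟩ := Finset.mem_filter.mp hRP
  have hRQ : R ⊆ Q := Finset.mem_powerset.mp hRQ'
  have hRne : R.Nonempty := Finset.card_pos.mp hRcard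
  set K := R.inf id with hK
  have hKne : K.Nonempty := Finset.card_pos.mp hKcard
  have hclR : ∀ s ∈ R, G.IsNClique G.cliqueNum s := fun s hs => hQ s (hRQ hs)
  by_cases hRQeq : R = Q
  · left
    obtain ⟨x, hx⟩ := hKne
    refine ⟨x, Set.mem_iInter₂.mpr fun s hs => ?_⟩
    have : K ⊆ s := by rw [hK, hRQeq]; exact inf_subset' hs
    exact this hx
  · right
    -- R is a proper subset of Q
    have hssQ : R ⊂ Q := ssubset_of_subset_of_ne hRQ hRQeq
    obtain ⟨S₀, hS₀Q, hS₀R⟩ := Finset.exists_of_ssubset hssQ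
    -- maximality: any clique outside R misses K
    have hmax : ∀ S ∈ Q, S ∉ R → ¬(K ∩ S).Nonempty := by
      rintro S hSQ hSR ⟨x, hx⟩
      have hmem : insert S R ∈ P := by
        refine Finset.mem_filter.mpr ⟨Finset.mem_powerset.mpr ?_, ?_, ?_⟩
        · exact Finset.insert_subset hSQ hRQ
        · simp
        · rw [Finset.inf_insert]
          simp only [id_eq]
          refine Finset.card_pos.mpr ⟨x, ?_⟩
          rw [Finset.inf_eq_inter, Finset.mem_inter]
          rw [Finset.mem_inter] at hx
          exact ⟨hx.2, hx.1⟩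
      have hc := hRmax _ hmem
      rw [Finset.card_insert_of_notMem hSR] at hc
      omega
    -- crossing edge
    obtain ⟨T₀, S, hT₀R, hSQ, hSR, hTSne⟩ :
        ∃ T S, T ∈ R ∧ S ∈ Q ∧ S ∉ R ∧ (T ∩ S).Nonempty := by
      obtain ⟨t, ht⟩ := hRne
      obtain ⟨p⟩ := hconn.preconnected ⟨S₀, hS₀Q⟩ ⟨t, hRQ ht⟩
      obtain ⟨d, _, hd1, hd2⟩ :=
        p.exists_boundary_dart {v : {s // s ∈ Q} | v.1 ∉ R} hS₀R (by simp [ht])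
      have hadj := d.adj
      obtain ⟨hne, hint⟩ := hadj
      refine ⟨d.toProd.2.1, d.toProd.1.1, ?_, d.toProd.1.2, hd1, ?_⟩
      · simpa using hd2
      · rwa [Finset.inter_comm]
    have hSclique := hQ S hSQ
    have hKS : ¬(K ∩ S).Nonempty := hmax S hSQ hSR
    -- Hajnal + degree bounds
    have hhaj : 2 * G.cliqueNum ≤ K.card + (R.sup id).card := hajnal G R hRne hclR
    have hUle : (R.sup id).card ≤ G.maxDegree + 1 := sup_card_le G R hclR hKne.choose_spec
    -- equality facts for cliques of R meeting S
    have hin : ∀ T ∈ R, (T ∩ S).Nonempty →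
        2 * K.card = G.cliqueNum ∧ 2 * (T ∩ S).card = G.cliqueNum ∧ T \ K = T ∩ S := by
      intro T hT hTS
      have hKT : K ⊆ T := inf_subset' hT
      have hdisj : Disjoint K (T ∩ S) := by
        rw [Finset.disjoint_left]
        intro x hxK hxTS
        exact hKS ⟨x, Finset.mem_inter.mpr ⟨hxK, (Finset.mem_inter.mp hxTS).2⟩⟩
      have hsubT : K ∪ (T ∩ S) ⊆ T := Finset.union_subset hKT Finset.inter_subset_left
      have hcard : K.card + (T ∩ S).card ≤ G.cliqueNum := by
        rw [← Finset.card_union_of_disjoint hdisj, ← (hclR T hT).card_eq]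
        exact Finset.card_le_card hsubT
      have hpair : G.cliqueNum ≤ 2 * (T ∩ S).card := pair_bound G hω' (hclR T hT) hSclique hTS
      have h2K : G.cliqueNum ≤ 2 * K.card := by omega
      refine ⟨by omega, by omega, ?_⟩
      have hequnion : K ∪ (T ∩ S) = T := by
        apply Finset.eq_of_subset_of_card_le hsubT
        rw [(hclR T hT).card_eq, Finset.card_union_of_disjoint hdisj]
        omega
      ext x
      simp only [Finset.mem_sdiff, Finset.mem_inter]
      constructor
      · rintro ⟨hxT, hxK⟩
        rw [← hequnion] at hxT
        rcases Finset.mem_union.mp hxT with h | h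
        · exact absurd h hxK
        · exact Finset.mem_inter.mp h
      · rintro ⟨hxT, hxS⟩
        exact ⟨hxT, fun hxK => hKS ⟨x, Finset.mem_inter.mpr ⟨hxK, hxS⟩⟩⟩
    have h2K : 2 * K.card = G.cliqueNum := (hin T₀ hT₀R hTSne).1
    -- z outside the union
    have hz : ∃ z, z ∈ S ∧ z ∉ R.sup id := by
      by_contra h
      push_neg at h
      obtain ⟨v, hv⟩ := hKne
      refine insert_clique_false G hSclique (v := v) ?_ ?_
      · intro hvS
        exact hKS ⟨v, Finset.mem_inter.mpr ⟨hv, hvS⟩⟩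
      · intro u huS
        obtain ⟨T, hTR, huT⟩ := Finset.mem_sup.mp (h u huS)
        have hvT : v ∈ T := inf_subset' hTR hv
        have hne : v ≠ u := by
          rintro rfl
          exact hKS ⟨v, Finset.mem_inter.mpr ⟨hv, huS⟩⟩
        exact clique_adj' G (hclR T hTR).isClique hvT huT hne
    set U := R.sup id with hU
    have hKU : K ⊆ U := by
      obtain ⟨T, hT⟩ := hRne
      exact Finset.Subset.trans (inf_subset' hT) (subset_sup' hT)
    set W := U \ K with hW
    have hWcard : W.card + K.card = U.card := Finset.card_sdiff_add_card_eq_card hKU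
    have hE : ∀ T ∈ R, T \ K ⊆ W ∧ 2 * (T \ K).card = G.cliqueNum := by
      intro T hT
      have hKT : K ⊆ T := inf_subset' hT
      constructor
      · intro x hx
        rw [Finset.mem_sdiff] at hx ⊢
        exact ⟨subset_sup' hT hx.1, hx.2⟩
      · have h1 := Finset.card_sdiff_add_card_eq_card hKT
        have h2 := (hclR T hT).card_eq
        omega
    have hWle : W.card ≤ G.cliqueNum := by omega
    -- partition into Rin / Rout
    set Rin := R.filter (fun T => (T ∩ S).Nonempty) with hRin
    set Rout := R.filter (fun T => ¬(T ∩ S).Nonempty) with hRout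
    have hsplit : Rin.card + Rout.card = R.card :=
      Finset.card_filter_add_card_filter_not (p := fun T => (T ∩ S).Nonempty)
    have hT₀in : T₀ ∈ Rin := Finset.mem_filter.mpr ⟨hT₀R, hTSne⟩
    -- Rout is nonempty
    have houtne : Rout.Nonempty := by
      rw [Finset.nonempty_iff_ne_empty]
      intro hout
      have hallin : ∀ T ∈ R, (T ∩ S).Nonempty := by
        intro T hT
        by_contra h
        have : T ∈ Rout := Finset.mem_filter.mpr ⟨hT, h⟩
        rw [hout] at this
        exact Finset.notMem_empty _ this
      have hWS : W ⊆ S := by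
        intro x hx
        rw [hW, Finset.mem_sdiff] at hx
        obtain ⟨T, hT, hxT⟩ := Finset.mem_sup.mp hx.1
        have heq := (hin T hT (hallin T hT)).2.2
        have hxTK : x ∈ T \ K := Finset.mem_sdiff.mpr ⟨hxT, hx.2⟩
        rw [heq] at hxTK
        exact (Finset.mem_inter.mp hxTK).2
      obtain ⟨z, hzS, hzU⟩ := hz
      have hzW : z ∉ W := fun h => hzU (Finset.mem_sdiff.mp h).1
      have hbig : W.card + 1 ≤ S.card := by
        have hsub : insert z W ⊆ S := Finset.insert_subset hzS hWS
        calc W.card + 1 = (insert z W).card := (Finset.card_insert_of_notMem hzW).symm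
        _ ≤ S.card := Finset.card_le_card hsub
      have hSc : S.card = G.cliqueNum := hSclique.card_eq
      omega
    -- key pair-collapsing lemma
    have hpairEq : ∀ T₁ ∈ R, ∀ T₂ ∈ R, ∀ F : Finset V, F ⊆ W → 2 * F.card = G.cliqueNum →
        Disjoint F ((T₁ \ K) ∪ (T₂ \ K)) → T₁ = T₂ := by
      intro T₁ h₁ T₂ h₂ F hFW hFc hdisj
      obtain ⟨hE₁W, hE₁c⟩ := hE T₁ h₁
      obtain ⟨hE₂W, hE₂c⟩ := hE T₂ h₂
      have hsub : ((T₁ \ K) ∪ (T₂ \ K)) ∪ F ⊆ W :=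
        Finset.union_subset (Finset.union_subset hE₁W hE₂W) hFW
      have hcard : ((T₁ \ K) ∪ (T₂ \ K)).card + F.card ≤ W.card := by
        rw [← Finset.card_union_of_disjoint hdisj.symm]
        exact Finset.card_le_card hsub
      have hunle : ((T₁ \ K) ∪ (T₂ \ K)).card ≤ (T₁ \ K).card := by omega
      have hequ : T₁ \ K = (T₁ \ K) ∪ (T₂ \ K) :=
        Finset.eq_of_subset_of_card_le Finset.subset_union_left hunle
      have h21 : T₂ \ K ⊆ T₁ \ K := by
        rw [hequ]; exact Finset.subset_union_right
      have heqsd : T₂ \ K = T₁ \ K :=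
        Finset.eq_of_subset_of_card_le h21 (by omega)
      have r1 : K ∪ (T₁ \ K) = T₁ := Finset.union_sdiff_of_subset (inf_subset' h₁)
      have r2 : K ∪ (T₂ \ K) = T₂ := Finset.union_sdiff_of_subset (inf_subset' h₂)
      rw [← r1, ← r2, heqsd]
    have hin1 : Rin.card ≤ 1 := by
      by_contra h
      obtain ⟨T₁, h₁, T₂, h₂, hne⟩ := Finset.one_lt_card.mp (show 1 < Rin.card by omega)
      obtain ⟨T₃, h₃⟩ := houtne
      obtain ⟨h₁R, h₁S⟩ := Finset.mem_filter.mp h₁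
      obtain ⟨h₂R, h₂S⟩ := Finset.mem_filter.mp h₂
      obtain ⟨h₃R, h₃S⟩ := Finset.mem_filter.mp h₃
      have e₁ := (hin T₁ h₁R h₁S).2.2
      have e₂ := (hin T₂ h₂R h₂S).2.2
      have hd : Disjoint (T₃ \ K) ((T₁ \ K) ∪ (T₂ \ K)) := by
        rw [Finset.disjoint_left]
        intro x hx3 hx12
        have hxS : x ∈ S := by
          rcases Finset.mem_union.mp hx12 with h' | h'
          · rw [e₁] at h'; exact (Finset.mem_inter.mp h').2
          · rw [e₂] at h'; exact (Finset.mem_inter.mp h').2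
        exact h₃S ⟨x, Finset.mem_inter.mpr ⟨(Finset.mem_sdiff.mp hx3).1, hxS⟩⟩
      exact hne (hpairEq T₁ h₁R T₂ h₂R (T₃ \ K) (hE T₃ h₃R).1 (hE T₃ h₃R).2 hd)
    have hout1 : Rout.card ≤ 1 := by
      by_contra h
      obtain ⟨T₂, h₂, T₃, h₃, hne⟩ := Finset.one_lt_card.mp (show 1 < Rout.card by omega)
      obtain ⟨h₂R, h₂S⟩ := Finset.mem_filter.mp h₂
      obtain ⟨h₃R, h₃S⟩ := Finset.mem_filter.mp h₃
      have e₀ := (hin T₀ hT₀R hTSne).2.2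
      have hd : Disjoint (T₀ \ K) ((T₂ \ K) ∪ (T₃ \ K)) := by
        rw [Finset.disjoint_left]
        intro x hx0 hx23
        have hxS : x ∈ S := by
          rw [e₀] at hx0; exact (Finset.mem_inter.mp hx0).2
        rcases Finset.mem_union.mp hx23 with h' | h'
        · exact h₂S ⟨x, Finset.mem_inter.mpr ⟨(Finset.mem_sdiff.mp h').1, hxS⟩⟩
        · exact h₃S ⟨x, Finset.mem_inter.mpr ⟨(Finset.mem_sdiff.mp h').1, hxS⟩⟩
      exact hne (hpairEq T₂ h₂R T₃ h₃R (T₀ \ K) (hE T₀ hT₀R).1 (hE T₀ hT₀R).2 hd)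
    have hR2 : R.card ≤ 2 := by omega
    -- no triangles
    have hnotri : ∀ A B C : Finset V, A ∈ Q → B ∈ Q → C ∈ Q → A ≠ B → A ≠ C → B ≠ C →
        (A ∩ B).Nonempty → (A ∩ C).Nonempty → ¬(B ∩ C).Nonempty := by
      intro A B C hA hB hC hab hac hbc h1 h2 h3
      obtain ⟨p, hp⟩ := triple_common G hω' (hQ A hA) (hQ B hB) (hQ C hC) h1 h2 h3
      have hmem : ({A, B, C} : Finset (Finset V)) ∈ P := by
        refine Finset.mem_filter.mpr ⟨Finset.mem_powerset.mpr ?_, ?_, ?_⟩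
        · intro s hs
          simp only [Finset.mem_insert, Finset.mem_singleton] at hs
          rcases hs with rfl | rfl | rfl <;> assumption
        · refine Finset.card_pos.mpr ⟨A, ?_⟩; simp
        · refine Finset.card_pos.mpr ⟨p, ?_⟩
          rw [Finset.inf_insert, Finset.inf_insert, Finset.inf_singleton]
          simp only [id_eq, Finset.inf_eq_inter]
          rw [Finset.mem_inter, Finset.mem_inter]
          simp only [Finset.mem_inter] at hp
          exact ⟨hp.1.1, hp.1.2, hp.2⟩
      have hcle := hRmax _ hmem
      have hc3 : ({A, B, C} : Finset (Finset V)).card = 3 := by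
        rw [Finset.card_insert_of_notMem (by simp [hab, hac]),
          Finset.card_insert_of_notMem (by simp [hbc]), Finset.card_singleton]
      simp only [hc3] at hcle
      omega
    -- equalities for disjoint neighbors
    have hhalf : ∀ A B C : Finset V, A ∈ Q → B ∈ Q → C ∈ Q → A ≠ B → A ≠ C → B ≠ C →
        (A ∩ B).Nonempty → (A ∩ C).Nonempty →
        (B ∩ C = ∅ ∧ 2 * (A ∩ B).card = G.cliqueNum ∧ 2 * (A ∩ C).card = G.cliqueNum) := by
      intro A B C hA hB hC hab hac hbc h1 h2
      have hBC : ¬(B ∩ C).Nonempty := hnotri A B C hA hB hC hab hac hbc h1 h2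
      have hBCe : B ∩ C = ∅ := Finset.not_nonempty_iff_eq_empty.mp hBC
      have hd : Disjoint (A ∩ B) (A ∩ C) := by
        rw [Finset.disjoint_left]
        intro x hx hy
        exact hBC ⟨x, Finset.mem_inter.mpr ⟨(Finset.mem_inter.mp hx).2, (Finset.mem_inter.mp hy).2⟩⟩
      have hc : (A ∩ B).card + (A ∩ C).card ≤ G.cliqueNum := by
        rw [← Finset.card_union_of_disjoint hd, ← (hQ A hA).card_eq]
        exact Finset.card_le_card
          (Finset.union_subset Finset.inter_subset_left Finset.inter_subset_left)
      have p1 := pair_bound G hω' (hQ A hA) (hQ B hB) h1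
      have p2 := pair_bound G hω' (hQ A hA) (hQ C hC) h2
      exact ⟨hBCe, by omega, by omega⟩
    constructor
    · -- max degree ≤ 2
      apply SimpleGraph.maxDegree_le_of_forall_degree_le
      intro A
      by_contra hdeg
      push_neg at hdeg
      rw [← SimpleGraph.card_neighborFinset_eq_degree] at hdeg
      obtain ⟨B, hB, C, hC, D, hD, hBC, hBD, hCD⟩ := Finset.two_lt_card.mp hdeg
      rw [SimpleGraph.mem_neighborFinset] at hB hC hD
      obtain ⟨hABne, hABi⟩ := hB
      obtain ⟨hACne, hACi⟩ := hC
      obtain ⟨hADne, hADi⟩ := hD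
      have cne : ∀ {X Y : {s // s ∈ Q}}, X ≠ Y → (X : Finset V) ≠ (Y : Finset V) :=
        fun h he => h (Subtype.ext he)
      have f1 := hhalf A.1 B.1 C.1 A.2 B.2 C.2 (cne hABne) (cne hACne) (cne hBC) hABi hACi
      have f2 := hhalf A.1 B.1 D.1 A.2 B.2 D.2 (cne hABne) (cne hADne) (cne hBD) hABi hADi
      have f3 := hhalf A.1 C.1 D.1 A.2 C.2 D.2 (cne hACne) (cne hADne) (cne hCD) hACi hADi
      -- three pairwise disjoint halves inside A
      have dBC : Disjoint ((A : Finset V) ∩ B) ((A : Finset V) ∩ C) := by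
        rw [Finset.disjoint_left]
        intro x hx hy
        have : x ∈ (B : Finset V) ∩ C :=
          Finset.mem_inter.mpr ⟨(Finset.mem_inter.mp hx).2, (Finset.mem_inter.mp hy).2⟩
        rw [f1.1] at this
        exact Finset.notMem_empty _ this
      have dBD : Disjoint ((A : Finset V) ∩ B) ((A : Finset V) ∩ D) := by
        rw [Finset.disjoint_left]
        intro x hx hy
        have : x ∈ (B : Finset V) ∩ D :=
          Finset.mem_inter.mpr ⟨(Finset.mem_inter.mp hx).2, (Finset.mem_inter.mp hy).2⟩
        rw [f2.1] at this
        exact Finset.notMem_empty _ this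
      have dCD : Disjoint ((A : Finset V) ∩ C) ((A : Finset V) ∩ D) := by
        rw [Finset.disjoint_left]
        intro x hx hy
        have : x ∈ (C : Finset V) ∩ D :=
          Finset.mem_inter.mpr ⟨(Finset.mem_inter.mp hx).2, (Finset.mem_inter.mp hy).2⟩
        rw [f3.1] at this
        exact Finset.notMem_empty _ this
      have dU : Disjoint ((A : Finset V) ∩ B ∪ (A : Finset V) ∩ C) ((A : Finset V) ∩ D) :=
        Finset.disjoint_union_left.mpr ⟨dBD, dCD⟩
      have hsum : ((A : Finset V) ∩ B).card + ((A : Finset V) ∩ C).card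
          + ((A : Finset V) ∩ D).card ≤ G.cliqueNum := by
        rw [← Finset.card_union_of_disjoint dBC, ← Finset.card_union_of_disjoint dU,
          ← (hQ A.1 A.2).card_eq]
        exact Finset.card_le_card (Finset.union_subset
          (Finset.union_subset Finset.inter_subset_left Finset.inter_subset_left)
          Finset.inter_subset_left)
      have := f1.2.1
      have := f1.2.2
      have := f2.2.2
      omega
    · intro A B C hAB hAC hBC
      obtain ⟨hABne, hABi⟩ := hAB
      obtain ⟨hACne, hACi⟩ := hAC
      have cne : ∀ {X Y : {s // s ∈ Q}}, X ≠ Y → (X : Finset V) ≠ (Y : Finset V) :=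
        fun h he => h (Subtype.ext he)
      exact hhalf A.1 B.1 C.1 A.2 B.2 C.2 (cne hABne) (cne hACne) (cne hBC) hABi hACi
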